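/- Let F be an n × n real matrix admitting a singular value decomposition F = U · S · Vᵀ, where U and V are n × n real orthogonal matrices (Uᵀ·U = 1, Vᵀ·V = 1) and S is diagonal with nonnegative diagonal entries. Then for every n × n real orthogonal matrix R (Rᵀ·R = 1), Tr(Fᵀ · R) ≤ Tr(S), and equality is attained at R = U · Vᵀ, i.e. Tr(Fᵀ · (U · Vᵀ)) = Tr(S). Hence R̂ := U · Vᵀ maximizes Tr(Fᵀ · R) over orthogonal matrices, so R̂ is the mode of the matrix Fisher distribution with unnormalized density exp(Tr(Fᵀ R)). -/
import Mathlib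


open Matrix

private lemma diag_le_one {n : ℕ} (M : Matrix (Fin n) (Fin n) ℝ)
    (h : Mᵀ * M = 1) (i : Fin n) : M i i ≤ 1 := by
  have h1 : (Mᵀ * M) i i = (1 : Matrix (Fin n) (Fin n) ℝ) i i := by rw [h]
  have h2 : ∑ j, M j i * M j i = 1 := by
    simpa [Matrix.mul_apply, Matrix.one_apply] using h1
  have h3 : M i i * M i i ≤ 1 := by
    rw [← h2]
    exact Finset.single_le_sum (f := fun j => M j i * M j i)
      (fun j _ => mul_self_nonneg _) (Finset.mem_univ i)
  nlinarith [mul_self_nonneg (M i i)]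

private lemma trace_S_mul {n : ℕ} (S M : Matrix (Fin n) (Fin n) ℝ)
    (hS : S.IsDiag) : Matrix.trace (S * M) = ∑ i, S i i * M i i := by
  unfold Matrix.trace
  simp only [Matrix.diag, Matrix.mul_apply]
  apply Finset.sum_congr rfl
  intro i _
  rw [Finset.sum_eq_single i]
  · intro j _ hj; rw [hS (Ne.symm hj), zero_mul]
  · intro h; exact absurd (Finset.mem_univ i) h

/-- Let `F = U * S * Vᵀ` be a singular value decomposition of a real `n × n`
matrix, with `U, V` orthogonal and `S` diagonal with nonnegative entries.
Then `Tr (Fᵀ * R) ≤ Tr S` for every orthogonal `R`, with equality attained at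
`R = U * Vᵀ`. Hence `U * Vᵀ` maximizes `Tr (Fᵀ R)` over orthogonal matrices,
i.e. it is the mode of the matrix Fisher distribution with parameter `F`. -/
theorem svd_mode_maximizes_trace
    {n : ℕ} (F U S V : Matrix (Fin n) (Fin n) ℝ)
    (hU : Uᵀ * U = 1) (hV : Vᵀ * V = 1)
    (hS : S.IsDiag) (hSnn : ∀ i, 0 ≤ S i i)
    (hF : F = U * S * Vᵀ) :
    (∀ R : Matrix (Fin n) (Fin n) ℝ, Rᵀ * R = 1 →
        Matrix.trace (Fᵀ * R) ≤ Matrix.trace S) ∧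
    Matrix.trace (Fᵀ * (U * Vᵀ)) = Matrix.trace S := by
  have hUU : U * Uᵀ = 1 := mul_eq_one_comm.mp hU
  have hST : Sᵀ = S := by
    ext i j
    by_cases h : i = j
    · subst h; rfl
    · rw [Matrix.transpose_apply, hS h, hS (Ne.symm h)]
  have hFT : Fᵀ = V * S * Uᵀ := by
    rw [hF]; simp [Matrix.transpose_mul, hST, Matrix.mul_assoc]
  constructor
  · intro R hR
    set M := Uᵀ * R * V with hM
    have hMo : Mᵀ * M = 1 := by
      rw [hM]
      have h1 : (Uᵀ * R * V)ᵀ * (Uᵀ * R * V) = Vᵀ * (Rᵀ * ((U * Uᵀ) * R) * V) := by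
        simp only [Matrix.transpose_mul, Matrix.transpose_transpose, Matrix.mul_assoc]
      rw [h1, hUU, Matrix.one_mul, hR, Matrix.one_mul, hV]
    have htr : Matrix.trace (Fᵀ * R) = Matrix.trace (S * M) := by
      rw [hFT, hM]
      calc Matrix.trace (V * S * Uᵀ * R)
          = Matrix.trace (V * (S * (Uᵀ * R))) := by simp only [Matrix.mul_assoc]
        _ = Matrix.trace (S * (Uᵀ * R) * V) := by
            rw [Matrix.trace_mul_comm, Matrix.mul_assoc]
        _ = Matrix.trace (S * (Uᵀ * R * V)) := by simp only [Matrix.mul_assoc]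
    rw [htr, trace_S_mul S M hS]
    have : Matrix.trace S = ∑ i, S i i := rfl
    rw [this]
    apply Finset.sum_le_sum
    intro i _
    calc S i i * M i i ≤ S i i * 1 :=
          mul_le_mul_of_nonneg_left (diag_le_one M hMo i) (hSnn i)
      _ = S i i := mul_one _
  · rw [hFT]
    calc Matrix.trace (V * S * Uᵀ * (U * Vᵀ))
        = Matrix.trace (V * S * (Uᵀ * U) * Vᵀ) := by simp only [Matrix.mul_assoc]
      _ = Matrix.trace (V * S * Vᵀ) := by rw [hU, Matrix.mul_one]
      _ = Matrix.trace (S * Vᵀ * V) := by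
          rw [Matrix.mul_assoc, Matrix.trace_mul_comm, Matrix.mul_assoc]
      _ = Matrix.trace S := by rw [Matrix.mul_assoc, hV, Matrix.mul_one]
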